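/- Let ω : (0,1] → ℝ be nonnegative with 4π ∫₀¹ r⁴ ω(r) dr = 6. Define λ_δ(ξ) = (4π/δ²) ∫₀^{π/2} sin φ ∫₀¹ r² ω(r)(1 − cos(r cos(φ) δ|ξ|)) dr dφ for ξ ∈ ℝ³. Then for all ξ with δ|ξ| > 1, λ_δ(ξ) ≥ 1/(16 δ²). -/

import Mathlib

open MeasureTheory intervalIntegral Set Real Function

lemma finite_restrict_Ioc (a b : ℝ) : IsFiniteMeasure (volume.restrict (Ioc a b)) := by
  constructor
  rw [Measure.restrict_apply_univ, Real.volume_Ioc]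
  exact ENNReal.ofReal_lt_top

lemma cos_half_formula (x : ℝ) : Real.cos x = 1 - 2 * Real.sin (x / 2) ^ 2 := by
  have h2 : Real.cos (2 * (x / 2)) = 1 - 2 * Real.sin (x / 2) ^ 2 := by
    rw [Real.cos_two_mul, Real.cos_sq']; ring
  have hx : 2 * (x / 2) = x := by ring
  rwa [hx] at h2

lemma one_sub_cos_le_half_sq (x : ℝ) : 1 - Real.cos x ≤ x ^ 2 / 2 := by
  have h := cos_half_formula x
  have := Real.sin_sq_le_sq (x := x / 2)
  nlinarith

lemma cos_quad_lower {u : ℝ} (h0 : 0 ≤ u) (h2 : u ≤ 2) :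
    u ^ 2 / 2 - u ^ 4 / 16 ≤ 1 - Real.cos u := by
  have h := cos_half_formula u
  rcases eq_or_lt_of_le h0 with rfl | hpos
  · simp
  · have hs : u / 2 - (u / 2) ^ 3 / 4 < Real.sin (u / 2) :=
      by have := Real.sin_gt_sub_cube (x := u / 2) (by linarith); nlinarith [pow_pos (by linarith : (0:ℝ) < u / 2) 3]
    have hu1 : (u / 2) ^ 2 ≤ 1 := by nlinarith
    have hnn : 0 ≤ u / 2 - (u / 2) ^ 3 / 4 := by nlinarith
    have hsq : (u / 2 - (u / 2) ^ 3 / 4) ^ 2 ≤ Real.sin (u / 2) ^ 2 :=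
      pow_le_pow_left₀ hnn hs.le 2
    nlinarith [pow_nonneg h0 6]

lemma key_t_integral {r A : ℝ} (hr : 0 < r) (hr1 : r ≤ 1) (hA : 1 ≤ A) :
    r ^ 2 / 96 ≤ ∫ t in (0:ℝ)..(1/2), (1 - Real.cos (r * t * A)) := by
  have hc0 : 0 < r * A := mul_pos hr (by linarith)
  have hcr : r ≤ r * A := le_mul_of_one_le_right hr.le hA
  have hrw : ∀ t : ℝ, r * t * A = (r * A) * t := fun t => by ring
  rcases le_or_gt (r * A) 4 with h4 | h4
  · -- small frequency: quartic lower bound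
    set c := r * A with hc
    have hmono : ∫ t in (0:ℝ)..(1/2), ((c * t) ^ 2 / 2 - (c * t) ^ 4 / 16)
        ≤ ∫ t in (0:ℝ)..(1/2), (1 - Real.cos (r * t * A)) := by
      apply intervalIntegral.integral_mono_on (by norm_num)
      · exact (Continuous.intervalIntegrable (by continuity) _ _)
      · exact (Continuous.intervalIntegrable (by continuity) _ _)
      · intro t ht
        rw [hrw t]
        exact cos_quad_lower (mul_nonneg hc0.le ht.1) (by nlinarith [ht.1, ht.2])
    have hval : ∫ t in (0:ℝ)..(1/2), ((c * t) ^ 2 / 2 - (c * t) ^ 4 / 16)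
        = c ^ 2 / 48 - c ^ 4 / 2560 := by
      have h1 : ∀ t : ℝ, (c * t) ^ 2 / 2 - (c * t) ^ 4 / 16
          = c ^ 2 / 2 * t ^ 2 - c ^ 4 / 16 * t ^ 4 := fun t => by ring
      simp only [h1]
      rw [intervalIntegral.integral_sub, intervalIntegral.integral_const_mul,
        intervalIntegral.integral_const_mul, integral_pow, integral_pow]
      · norm_num; ring
      · exact ((continuous_const.mul (continuous_pow 2)).intervalIntegrable _ _)
      · exact ((continuous_const.mul (continuous_pow 4)).intervalIntegrable _ _)
    rw [hval] at hmono
    refine le_trans ?_ hmono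
    have hr2 : r ^ 2 ≤ c ^ 2 := pow_le_pow_left₀ hr.le hcr 2
    have hc2 : c ^ 2 ≤ 16 := by nlinarith
    nlinarith [mul_le_mul_of_nonneg_left hc2 (sq_nonneg c)]
  · -- large frequency: exact evaluation
    have hcne : r * A ≠ 0 := ne_of_gt hc0
    have hcos : ∫ t in (0:ℝ)..(1/2), Real.cos ((r * A) * t)
        = Real.sin (r * A / 2) / (r * A) := by
      rw [intervalIntegral.integral_comp_mul_left Real.cos hcne]
      rw [integral_cos]
      rw [smul_eq_mul]
      rw [mul_zero, Real.sin_zero]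
      field_simp
      rw [sub_zero]
    have hone : (∫ t in (0:ℝ)..(1/2), (1:ℝ)) = 1/2 := by simp
    have hval : ∫ t in (0:ℝ)..(1/2), (1 - Real.cos (r * t * A))
        = 1 / 2 - Real.sin (r * A / 2) / (r * A) := by
      simp only [hrw]
      have hsub : (∫ t in (0:ℝ)..(1/2), ((1:ℝ) - Real.cos ((r * A) * t)))
          = (∫ t in (0:ℝ)..(1/2), (1:ℝ)) - ∫ t in (0:ℝ)..(1/2), Real.cos ((r * A) * t) :=
        intervalIntegral.integral_sub intervalIntegrable_const
          ((by continuity : Continuous fun t : ℝ => Real.cos ((r * A) * t)).intervalIntegrable _ _)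
      rw [hsub, hone, hcos]
    rw [hval]
    have hsin : Real.sin (r * A / 2) ≤ 1 := Real.sin_le_one _
    have h1 : Real.sin (r * A / 2) / (r * A) ≤ 1 / (r * A) := by gcongr
    have h2 : 1 / (r * A) < 1 / 4 := by
      rw [div_lt_div_iff₀ hc0 (by norm_num)]; linarith
    nlinarith

lemma J_nonneg (r A : ℝ) : 0 ≤ ∫ t in (0:ℝ)..(1/2), (1 - Real.cos (r * t * A)) :=
  intervalIntegral.integral_nonneg (by norm_num) (fun t _ => by
    linarith [Real.cos_le_one (r * t * A)])

lemma J_le (r A : ℝ) : (∫ t in (0:ℝ)..(1/2), (1 - Real.cos (r * t * A)))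
    ≤ r ^ 2 * A ^ 2 / 48 := by
  have hmono : (∫ t in (0:ℝ)..(1/2), (1 - Real.cos (r * t * A)))
      ≤ ∫ t in (0:ℝ)..(1/2), (r ^ 2 * A ^ 2 / 2 * t ^ 2) := by
    apply intervalIntegral.integral_mono_on (by norm_num)
    · exact (Continuous.intervalIntegrable (by continuity) _ _)
    · exact ((continuous_const.mul (continuous_pow 2)).intervalIntegrable _ _)
    · intro t ht
      have := one_sub_cos_le_half_sq (r * t * A)
      nlinarith [sq_nonneg (r * t * A)]
  have hval : (∫ t in (0:ℝ)..(1/2), (r ^ 2 * A ^ 2 / 2 * t ^ 2)) = r ^ 2 * A ^ 2 / 48 := by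
    rw [intervalIntegral.integral_const_mul, integral_pow]
    norm_num
    ring
  linarith [hmono, hval.le, hval.ge]

lemma J_cont (A : ℝ) : Continuous fun r : ℝ => ∫ t in (0:ℝ)..(1/2), (1 - Real.cos (r * t * A)) := by
  haveI := finite_restrict_Ioc (0:ℝ) (1/2)
  have hrw : ∀ r : ℝ, (∫ t in (0:ℝ)..(1/2), (1 - Real.cos (r * t * A)))
      = ∫ t, (1 - Real.cos (r * t * A)) ∂(volume.restrict (Ioc 0 (1/2))) := fun r =>
    intervalIntegral.integral_of_le (by norm_num)
  simp only [hrw]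
  rw [continuous_iff_continuousAt]
  intro r₀
  apply MeasureTheory.continuousAt_of_dominated (bound := fun _ => (2:ℝ))
  · exact Filter.Eventually.of_forall fun r =>
      (Continuous.aestronglyMeasurable (continuous_const.sub (Real.continuous_cos.comp
        ((continuous_const.mul continuous_id).mul continuous_const))))
  · exact Filter.Eventually.of_forall fun r => ae_of_all _ fun t => by
      rw [Real.norm_eq_abs, abs_le]
      constructor <;> linarith [Real.cos_le_one (r * t * A), Real.neg_one_le_cos (r * t * A)]
  · exact integrable_const 2
  · exact ae_of_all _ fun t => (Continuous.continuousAt (continuous_const.sub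
      (Real.continuous_cos.comp ((continuous_id.mul continuous_const).mul continuous_const))))

lemma main_aux (ω : ℝ → ℝ) (A : ℝ) (hmeas : Measurable ω) (hω : ∀ r, 0 ≤ ω r)
    (hInt : IntegrableOn (fun r => r ^ 4 * ω r) (Ioc 0 1) volume)
    (hA : 1 < A) :
    1 / 96 * (∫ r in (0:ℝ)..1, r ^ 4 * ω r) ≤
      ∫ φ in (0:ℝ)..(Real.pi/2), Real.sin φ *
        ∫ r in (0:ℝ)..1, r ^ 2 * ω r * (1 - Real.cos (r * Real.cos φ * A)) := by
  haveI := finite_restrict_Ioc (0:ℝ) (1/2)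
  haveI := finite_restrict_Ioc (0:ℝ) 1
  set μ2 := volume.restrict (Ioc (0:ℝ) 1) with hμ2
  set μ1 := volume.restrict (Ioc (0:ℝ) (1/2)) with hμ1
  set K : ℝ → ℝ := fun c => ∫ r in (0:ℝ)..1, r ^ 2 * ω r * (1 - Real.cos (r * c * A)) with hK
  -- measurability of the inner integrand
  have hFm : ∀ c : ℝ, Measurable (fun r => r ^ 2 * ω r * (1 - Real.cos (r * c * A))) := by
    intro c
    exact ((measurable_id.pow_const 2).mul hmeas).mul
      (measurable_const.sub (Real.measurable_cos.comp
        ((measurable_id.mul_const c).mul_const A)))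
  -- pointwise bound
  have hFbound : ∀ (M c : ℝ), |c| ≤ M → ∀ r ∈ Ioc (0:ℝ) 1,
      ‖r ^ 2 * ω r * (1 - Real.cos (r * c * A))‖ ≤ M ^ 2 * A ^ 2 / 2 * (r ^ 4 * ω r) := by
    intro M c hM r hr
    have hcos := Real.cos_le_one (r * c * A)
    have h0 : 0 ≤ r ^ 2 * ω r * (1 - Real.cos (r * c * A)) :=
      mul_nonneg (mul_nonneg (sq_nonneg r) (hω r)) (by linarith)
    rw [Real.norm_eq_abs, abs_of_nonneg h0]
    have h1 : 1 - Real.cos (r * c * A) ≤ (r * c * A) ^ 2 / 2 := by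
      have h2 : Real.cos (2 * ((r*c*A) / 2)) = 1 - 2 * Real.sin ((r*c*A) / 2) ^ 2 := by
        rw [Real.cos_two_mul, Real.cos_sq']; ring
      have hx : 2 * ((r*c*A) / 2) = (r*c*A) := by ring
      rw [hx] at h2
      have := Real.sin_sq_le_sq (x := (r*c*A) / 2)
      nlinarith
    have hc2 : c ^ 2 ≤ M ^ 2 := by
      have := sq_abs c
      nlinarith [abs_nonneg c]
    have hr2 : r ^ 2 ≤ 1 := by nlinarith [hr.1, hr.2]
    have hnn : 0 ≤ r ^ 2 * ω r := mul_nonneg (sq_nonneg r) (hω r)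
    calc r ^ 2 * ω r * (1 - Real.cos (r * c * A))
        ≤ r ^ 2 * ω r * ((r * c * A) ^ 2 / 2) := mul_le_mul_of_nonneg_left h1 hnn
      _ ≤ M ^ 2 * A ^ 2 / 2 * (r ^ 4 * ω r) := by
          nlinarith [sq_nonneg A, sq_nonneg r, sq_nonneg (r*A),
            mul_nonneg (mul_nonneg (sq_nonneg r) (sq_nonneg r)) (hω r),
            mul_nonneg (mul_nonneg (mul_nonneg (sq_nonneg r) (sq_nonneg r)) (hω r)) (sq_nonneg A)]
  -- integrability of the inner integrand
  have hFint : ∀ c : ℝ, |c| ≤ 1 →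
      IntegrableOn (fun r => r ^ 2 * ω r * (1 - Real.cos (r * c * A))) (Ioc 0 1) volume := by
    intro c hc
    apply Integrable.mono' (hInt.const_mul (A ^ 2 / 2)) ((hFm c).aestronglyMeasurable)
    refine (ae_restrict_iff' measurableSet_Ioc).mpr (ae_of_all _ fun r hr => ?_)
    simpa using hFbound 1 c hc r hr
  -- K as a measure integral
  have hKr : ∀ c : ℝ, K c = ∫ r, r ^ 2 * ω r * (1 - Real.cos (r * c * A)) ∂μ2 := fun c =>
    intervalIntegral.integral_of_le (by norm_num)
  -- nonnegativity of K
  have hK0 : ∀ c : ℝ, 0 ≤ K c := fun c =>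
    intervalIntegral.integral_nonneg (by norm_num) fun r _ =>
      mul_nonneg (mul_nonneg (sq_nonneg r) (hω r))
        (by linarith [Real.cos_le_one (r * c * A)])
  -- continuity of K
  have hKcont : Continuous K := by
    rw [continuous_iff_continuousAt]
    intro c₀
    simp only [hK]
    have hrw : (fun c => ∫ r in (0:ℝ)..1, r ^ 2 * ω r * (1 - Real.cos (r * c * A)))
        = fun c => ∫ r, r ^ 2 * ω r * (1 - Real.cos (r * c * A)) ∂μ2 := by
      funext c
      exact intervalIntegral.integral_of_le (by norm_num)
    rw [hrw]
    apply MeasureTheory.continuousAt_of_dominated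
      (bound := fun r => (|c₀| + 1) ^ 2 * A ^ 2 / 2 * (r ^ 4 * ω r))
    · exact Filter.Eventually.of_forall fun c => (hFm c).aestronglyMeasurable
    · have hev : ∀ᶠ c in nhds c₀, |c| ≤ |c₀| + 1 := by
        filter_upwards [Metric.ball_mem_nhds c₀ one_pos] with c hc
        rw [Metric.mem_ball, Real.dist_eq] at hc
        have := abs_sub_abs_le_abs_sub c c₀
        linarith
      filter_upwards [hev] with c hc
      exact (ae_restrict_iff' measurableSet_Ioc).mpr (ae_of_all _ fun r hr => hFbound _ c hc r hr)
    · exact hInt.const_mul _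
    · exact ae_of_all _ fun r => Continuous.continuousAt (continuous_const.mul
        (continuous_const.sub (Real.continuous_cos.comp
          ((continuous_const.mul continuous_id).mul continuous_const))))
  -- continuity of the outer integrand
  have hH : Continuous fun φ => Real.sin φ * K (Real.cos φ) :=
    Real.continuous_sin.mul (hKcont.comp Real.continuous_cos)
  have hpi := Real.pi_pos
  -- split the outer integral
  have hsplit : (∫ φ in (0:ℝ)..(Real.pi/2), Real.sin φ * K (Real.cos φ))
      = (∫ φ in (0:ℝ)..(Real.pi/3), Real.sin φ * K (Real.cos φ))
        + ∫ φ in (Real.pi/3)..(Real.pi/2), Real.sin φ * K (Real.cos φ) :=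
    (intervalIntegral.integral_add_adjacent_intervals
      (hH.intervalIntegrable _ _) (hH.intervalIntegrable _ _)).symm
  have hfirst : 0 ≤ ∫ φ in (0:ℝ)..(Real.pi/3), Real.sin φ * K (Real.cos φ) :=
    intervalIntegral.integral_nonneg (by positivity) fun φ hφ =>
      mul_nonneg (Real.sin_nonneg_of_nonneg_of_le_pi hφ.1 (by linarith [hφ.2])) (hK0 _)
  -- substitution t = cos φ
  have hsub : (∫ φ in (Real.pi/3)..(Real.pi/2), Real.sin φ * K (Real.cos φ))
      = ∫ t in (0:ℝ)..(1/2), K t := by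
    have h := intervalIntegral.integral_comp_smul_deriv
      (f := Real.cos) (f' := fun x => -Real.sin x) (g := K)
      (a := Real.pi/3) (b := Real.pi/2)
      (fun x _ => Real.hasDerivAt_cos x) (Real.continuous_sin.neg.continuousOn) hKcont
    rw [Real.cos_pi_div_three, Real.cos_pi_div_two] at h
    have h2 : (∫ x in (Real.pi/3)..(Real.pi/2), (-Real.sin x) • (K ∘ Real.cos) x)
        = -∫ x in (Real.pi/3)..(Real.pi/2), Real.sin x * K (Real.cos x) := by
      rw [← intervalIntegral.integral_neg]
      congr 1
      funext x
      simp [Function.comp, smul_eq_mul]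
    rw [h2] at h
    have h3 : (∫ u in (1/2:ℝ)..(0:ℝ), K u) = -∫ u in (0:ℝ)..(1/2), K u :=
      intervalIntegral.integral_symm _ _
    rw [h3] at h
    linarith
  -- Fubini on [0,1/2] × [0,1]
  have hum : AEStronglyMeasurable
      (uncurry fun t r => r ^ 2 * ω r * (1 - Real.cos (r * t * A))) (μ1.prod μ2) := by
    apply Measurable.aestronglyMeasurable
    exact ((measurable_snd.pow_const 2).mul (hmeas.comp measurable_snd)).mul
      (measurable_const.sub (Real.measurable_cos.comp
        ((measurable_snd.mul measurable_fst).mul_const A)))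
  have huint : Integrable (uncurry fun t r => r ^ 2 * ω r * (1 - Real.cos (r * t * A)))
      (μ1.prod μ2) := by
    rw [MeasureTheory.integrable_prod_iff hum]
    constructor
    · refine (ae_restrict_iff' measurableSet_Ioc).mpr (ae_of_all _ fun t ht => ?_)
      exact hFint t (by rw [abs_le]; exact ⟨by linarith [ht.1], by linarith [ht.2]⟩)
    · apply Integrable.mono'
        (integrable_const (A ^ 2 / 2 * ∫ r, (r ^ 4 * ω r) ∂μ2))
      · exact hum.norm.integral_prod_right'
      · refine (ae_restrict_iff' measurableSet_Ioc).mpr (ae_of_all _ fun t ht => ?_)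
        simp only [Function.uncurry_apply_pair]
        have hnn : 0 ≤ ∫ r, ‖r ^ 2 * ω r * (1 - Real.cos (r * t * A))‖ ∂μ2 :=
          integral_nonneg fun r => norm_nonneg _
        rw [Real.norm_eq_abs, abs_of_nonneg hnn]
        have hb : (∫ r, ‖r ^ 2 * ω r * (1 - Real.cos (r * t * A))‖ ∂μ2)
            ≤ ∫ r, A ^ 2 / 2 * (r ^ 4 * ω r) ∂μ2 := by
          apply integral_mono_of_nonneg (ae_of_all _ fun r => norm_nonneg _)
            (hInt.const_mul _)
          refine (ae_restrict_iff' measurableSet_Ioc).mpr (ae_of_all _ fun r hr => ?_)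
          simpa using hFbound 1 t
            (by rw [abs_le]; exact ⟨by linarith [ht.1], by linarith [ht.2]⟩) r hr
        rw [MeasureTheory.integral_const_mul] at hb
        exact hb
  have hswap := MeasureTheory.integral_integral_swap huint
  -- identify the two sides
  have hLHS : (∫ t, ∫ r, r ^ 2 * ω r * (1 - Real.cos (r * t * A)) ∂μ2 ∂μ1)
      = ∫ t in (0:ℝ)..(1/2), K t := by
    rw [intervalIntegral.integral_of_le (by norm_num : (0:ℝ) ≤ 1/2)]
    exact MeasureTheory.integral_congr_ae (ae_of_all _ fun t => (hKr t).symm)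
  have hRHS : (∫ r, ∫ t, r ^ 2 * ω r * (1 - Real.cos (r * t * A)) ∂μ1 ∂μ2)
      = ∫ r, (r ^ 2 * ω r) * (∫ t in (0:ℝ)..(1/2), (1 - Real.cos (r * t * A))) ∂μ2 := by
    refine MeasureTheory.integral_congr_ae (ae_of_all _ fun r => ?_)
    show (∫ t, r ^ 2 * ω r * (1 - Real.cos (r * t * A)) ∂μ1)
      = r ^ 2 * ω r * ∫ t in (0:ℝ)..(1/2), (1 - Real.cos (r * t * A))
    rw [MeasureTheory.integral_const_mul,
      intervalIntegral.integral_of_le (by norm_num : (0:ℝ) ≤ 1/2)]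
  -- compare with the r^4 moment
  have hJc := J_cont A
  have hRHS2 : (∫ r, 1/96 * (r ^ 4 * ω r) ∂μ2)
      ≤ ∫ r, (r ^ 2 * ω r) * (∫ t in (0:ℝ)..(1/2), (1 - Real.cos (r * t * A))) ∂μ2 := by
    apply MeasureTheory.integral_mono_ae (hInt.const_mul _)
    · apply Integrable.mono' (hInt.const_mul (A ^ 2 / 48))
      · exact (((measurable_id.pow_const 2).mul hmeas).mul hJc.measurable).aestronglyMeasurable
      · refine (ae_restrict_iff' measurableSet_Ioc).mpr (ae_of_all _ fun r hr => ?_)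
        have hnn : 0 ≤ r ^ 2 * ω r := mul_nonneg (sq_nonneg r) (hω r)
        have hJ0 := J_nonneg r A
        have hJle := J_le r A
        rw [Real.norm_eq_abs, abs_of_nonneg (mul_nonneg hnn hJ0)]
        have hr2 : r ^ 2 ≤ 1 := by nlinarith [hr.1, hr.2]
        calc (r ^ 2 * ω r) * (∫ t in (0:ℝ)..(1/2), (1 - Real.cos (r * t * A)))
            ≤ (r ^ 2 * ω r) * (r ^ 2 * A ^ 2 / 48) := mul_le_mul_of_nonneg_left hJle hnn
          _ = A ^ 2 / 48 * (r ^ 4 * ω r) := by ring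
    · refine (ae_restrict_iff' measurableSet_Ioc).mpr (ae_of_all _ fun r hr => ?_)
      have hkey := key_t_integral hr.1 hr.2 hA.le
      have hnn : 0 ≤ r ^ 2 * ω r := mul_nonneg (sq_nonneg r) (hω r)
      calc 1/96 * (r ^ 4 * ω r) = (r ^ 2 * ω r) * (r ^ 2 / 96) := by ring
        _ ≤ (r ^ 2 * ω r) * (∫ t in (0:ℝ)..(1/2), (1 - Real.cos (r * t * A))) :=
            mul_le_mul_of_nonneg_left hkey hnn
  have hval : (∫ r, 1/96 * (r ^ 4 * ω r) ∂μ2) = 1/96 * ∫ r in (0:ℝ)..1, r ^ 4 * ω r := by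
    rw [MeasureTheory.integral_const_mul, intervalIntegral.integral_of_le (by norm_num : (0:ℝ) ≤ 1)]
  have hgoal : 1 / 96 * (∫ r in (0:ℝ)..1, r ^ 4 * ω r)
      ≤ ∫ φ in (0:ℝ)..(Real.pi/2), Real.sin φ * K (Real.cos φ) := by
    have h5 : 1 / 96 * (∫ r in (0:ℝ)..1, r ^ 4 * ω r) ≤ ∫ t in (0:ℝ)..(1/2), K t := by
      rw [← hLHS, hswap, hRHS, ← hval]
      exact hRHS2
    rw [hsplit, hsub]
    linarith
  exact hgoal

theorem symbol_lower_bound_high_freq (ω : ℝ → ℝ)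
    (hω : ∀ r ∈ Set.Ioc (0 : ℝ) 1, 0 ≤ ω r)
    (hnorm : 4 * Real.pi * ∫ r in (0:ℝ)..1, r ^ 4 * ω r = 6)
    (δ : ℝ) (hδ : 0 < δ) (ξ : EuclideanSpace ℝ (Fin 3)) (hξ : 1 < δ * ‖ξ‖) :
    (4 * Real.pi / δ ^ 2) *
        ∫ φ in (0:ℝ)..(Real.pi / 2), Real.sin φ *
          ∫ r in (0:ℝ)..1, r ^ 2 * ω r * (1 - Real.cos (r * Real.cos φ * (δ * ‖ξ‖)))
      ≥ 1 / (16 * δ ^ 2) := by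
  have hπ := Real.pi_pos
  set A := δ * ‖ξ‖ with hAdef
  -- the fourth moment is interval integrable
  have hII : IntervalIntegrable (fun r => r ^ 4 * ω r) volume 0 1 := by
    by_contra h
    rw [intervalIntegral.integral_undef h, mul_zero] at hnorm
    norm_num at hnorm
  have hIoc : IntegrableOn (fun r => r ^ 4 * ω r) (Ioc 0 1) volume := hII.1
  -- measurable nonnegative representative of ω on (0,1]
  set ψ : ℝ → ℝ := hIoc.aestronglyMeasurable.mk _ with hψdef
  have hψm : Measurable ψ := hIoc.aestronglyMeasurable.stronglyMeasurable_mk.measurable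
  set ω₀ : ℝ → ℝ := fun r => max (ψ r / r ^ 4) 0 with hω₀def
  have hω₀m : Measurable ω₀ := (hψm.div (measurable_id.pow_const 4)).max measurable_const
  have hω₀nn : ∀ r, 0 ≤ ω₀ r := fun r => le_max_right _ _
  have haeg : ∀ᵐ r ∂(volume : Measure ℝ), r ∈ Ioc (0:ℝ) 1 → ω r = ω₀ r := by
    have h1 := (ae_restrict_iff' measurableSet_Ioc).mp hIoc.aestronglyMeasurable.ae_eq_mk
    filter_upwards [h1] with r h hr
    have hr0 : r ≠ 0 := ne_of_gt hr.1
    have h4 : r ^ 4 ≠ 0 := pow_ne_zero _ hr0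
    have hψr : ψ r = r ^ 4 * ω r := (h hr).symm
    rw [hω₀def]
    simp only
    rw [hψr, mul_comm, mul_div_assoc, div_self h4, mul_one]
    exact (max_eq_left (hω r hr)).symm
  -- transfer the moment integral
  have hmom : (∫ r in (0:ℝ)..1, r ^ 4 * ω r) = ∫ r in (0:ℝ)..1, r ^ 4 * ω₀ r := by
    apply intervalIntegral.integral_congr_ae
    filter_upwards [haeg] with r h hr
    rw [Set.uIoc_of_le (by norm_num : (0:ℝ) ≤ 1)] at hr
    rw [h hr]
  -- transfer the inner integrals
  have hinner : ∀ φ : ℝ, (∫ r in (0:ℝ)..1, r ^ 2 * ω r * (1 - Real.cos (r * Real.cos φ * A)))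
      = ∫ r in (0:ℝ)..1, r ^ 2 * ω₀ r * (1 - Real.cos (r * Real.cos φ * A)) := by
    intro φ
    apply intervalIntegral.integral_congr_ae
    filter_upwards [haeg] with r h hr
    rw [Set.uIoc_of_le (by norm_num : (0:ℝ) ≤ 1)] at hr
    rw [h hr]
  have hIoc₀ : IntegrableOn (fun r => r ^ 4 * ω₀ r) (Ioc 0 1) volume := by
    apply hIoc.congr
    refine (ae_restrict_iff' measurableSet_Ioc).mpr ?_
    filter_upwards [haeg] with r h hr
    rw [h hr]
  have hmain := main_aux ω₀ A hω₀m hω₀nn hIoc₀ hξ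
  -- rewrite in terms of ω
  have houter : (∫ φ in (0:ℝ)..(Real.pi/2), Real.sin φ *
        ∫ r in (0:ℝ)..1, r ^ 2 * ω r * (1 - Real.cos (r * Real.cos φ * A)))
      = ∫ φ in (0:ℝ)..(Real.pi/2), Real.sin φ *
        ∫ r in (0:ℝ)..1, r ^ 2 * ω₀ r * (1 - Real.cos (r * Real.cos φ * A)) := by
    apply intervalIntegral.integral_congr
    intro φ _
    show Real.sin φ * (∫ r in (0:ℝ)..1, r ^ 2 * ω r * (1 - Real.cos (r * Real.cos φ * A)))
      = Real.sin φ * ∫ r in (0:ℝ)..1, r ^ 2 * ω₀ r * (1 - Real.cos (r * Real.cos φ * A))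
    rw [hinner φ]
  rw [ge_iff_le]
  set T := ∫ r in (0:ℝ)..1, r ^ 4 * ω r with hT
  set S := ∫ φ in (0:ℝ)..(Real.pi/2), Real.sin φ *
        ∫ r in (0:ℝ)..1, r ^ 2 * ω r * (1 - Real.cos (r * Real.cos φ * A)) with hS
  have hST : 1 / 96 * T ≤ S := by
    have h := hmain
    rw [← houter] at h
    rw [hmom]
    exact h
  have hδ2 : (0:ℝ) < δ ^ 2 := by positivity
  have heq : 4 * Real.pi / δ ^ 2 * (1 / 96 * T) = 4 * Real.pi * T / (96 * δ ^ 2) := by ring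
  have h6 : 4 * Real.pi * T = 6 := hnorm
  have hfin : 4 * Real.pi / δ ^ 2 * (1 / 96 * T) = 1 / (16 * δ ^ 2) := by
    rw [heq, h6, div_eq_div_iff (by positivity) (by positivity)]
    ring
  have hmul : 4 * Real.pi / δ ^ 2 * (1 / 96 * T) ≤ 4 * Real.pi / δ ^ 2 * S :=
    mul_le_mul_of_nonneg_left hST (by positivity)
  linarith [hmul, hfin.ge, hfin.le]
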